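/- Any scoring function of the form S(x,y) = |1(x ≥ y) − τ| (φ(y) − φ(x) − φ'(x)(y − x)), where φ is convex with subgradient φ', is consistent for the τ-expectile relative to the class of probability measures F on an interval I for which E_F[Y] and E_F[φ(Y)] exist and are finite; if φ is strictly convex, S is strictly consistent for the τ-expectile. -/

import Mathlib

open MeasureTheory Set

private lemma breg_nonneg {I : Set ℝ} {φ φ' : ℝ → ℝ}
    (hsub : ∀ x ∈ I, ∀ y ∈ I, φ x + φ' x * (y - x) ≤ φ y)
    {x y : ℝ} (hx : x ∈ I) (hy : y ∈ I) :
    0 ≤ φ y - φ x - φ' x * (y - x) := by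
  have := hsub x hx y hy; linarith

private lemma breg_mono {I : Set ℝ} {φ φ' : ℝ → ℝ}
    (hconv : ConvexOn ℝ I φ)
    (hsub : ∀ x ∈ I, ∀ y ∈ I, φ x + φ' x * (y - x) ≤ φ y)
    {x μ y : ℝ} (hx : x ∈ I) (hμ : μ ∈ I) (hy : y ∈ segment ℝ x μ) :
    φ y - φ x - φ' x * (y - x) ≤ φ μ - φ x - φ' x * (μ - x) := by
  obtain ⟨a, b, ha, hb, hab, rfl⟩ := hy
  have hφ := hconv.2 hx hμ ha hb hab
  simp only [smul_eq_mul] at hφ ⊢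
  have hB : 0 ≤ φ μ - φ x - φ' x * (μ - x) := breg_nonneg hsub hx hμ
  have ha' : a = 1 - b := by linarith
  have h1 : φ (a*x + b*μ) - φ x - φ' x * ((a*x + b*μ) - x)
      ≤ b * (φ μ - φ x - φ' x * (μ - x)) := by
    calc φ (a*x + b*μ) - φ x - φ' x * ((a*x + b*μ) - x)
        ≤ a * φ x + b * φ μ - φ x - φ' x * ((a*x + b*μ) - x) := by linarith
      _ = b * (φ μ - φ x - φ' x * (μ - x)) := by rw [ha']; ring
  have h2 : 0 ≤ (1 - b) * (φ μ - φ x - φ' x * (μ - x)) := by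
    rw [← ha']; exact mul_nonneg ha hB
  nlinarith

private lemma breg_pos {I : Set ℝ} (hI : Convex ℝ I) {φ φ' : ℝ → ℝ}
    (hsconv : StrictConvexOn ℝ I φ)
    (hsub : ∀ x ∈ I, ∀ y ∈ I, φ x + φ' x * (y - x) ≤ φ y)
    {x μ : ℝ} (hx : x ∈ I) (hμ : μ ∈ I) (hne : x ≠ μ) :
    0 < φ μ - φ x - φ' x * (μ - x) := by
  have hz : (1/2 : ℝ) • x + (1/2 : ℝ) • μ ∈ I :=
    hI hx hμ (by norm_num) (by norm_num) (by norm_num)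
  have hlt := hsconv.2 hx hμ hne (by norm_num : (0:ℝ) < 1/2)
    (by norm_num : (0:ℝ) < 1/2) (by norm_num)
  simp only [smul_eq_mul] at hz hlt
  have hs := hsub x hx _ hz
  nlinarith

private lemma key_pointwise {τ : ℝ} (hτ : τ ∈ Ioo (0:ℝ) 1)
    {I : Set ℝ} (hI : Convex ℝ I) {φ φ' : ℝ → ℝ}
    (hconv : ConvexOn ℝ I φ)
    (hsub : ∀ x ∈ I, ∀ y ∈ I, φ x + φ' x * (y - x) ≤ φ y)
    {x μ : ℝ} (hx : x ∈ I) (hμ : μ ∈ I) (y : ℝ) :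
    min τ (1-τ) * (φ μ - φ x - φ' x * (μ - x))
      + (φ' μ - φ' x) * (τ * max (y - μ) 0 - (1-τ) * max (μ - y) 0)
    ≤ |(if y ≤ x then (1:ℝ) else 0) - τ| * (φ y - φ x - φ' x * (y - x))
      - |(if y ≤ μ then (1:ℝ) else 0) - τ| * (φ y - φ μ - φ' μ * (y - μ)) := by
  obtain ⟨hτ0, hτ1⟩ := hτ
  have habs1 : |(1:ℝ) - τ| = 1 - τ := abs_of_pos (by linarith)
  have habs0 : |(0:ℝ) - τ| = τ := by rw [zero_sub, abs_neg, abs_of_pos hτ0]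
  have hB : 0 ≤ φ μ - φ x - φ' x * (μ - x) := breg_nonneg hsub hx hμ
  by_cases h1 : y ≤ x <;> by_cases h2 : y ≤ μ
  · -- y ≤ x, y ≤ μ
    rw [if_pos h1, if_pos h2, habs1, max_eq_right (by linarith : y - μ ≤ 0),
      max_eq_left (by linarith : (0:ℝ) ≤ μ - y)]
    nlinarith [mul_le_mul_of_nonneg_right (min_le_right τ (1-τ)) hB]
  · -- μ < y ≤ x
    have h2' : μ < y := not_le.1 h2
    have hyseg : y ∈ segment ℝ x μ := by
      rw [segment_eq_uIcc, Set.mem_uIcc]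
      right; exact ⟨h2'.le, h1⟩
    have hyI : y ∈ I := hI.segment_subset hx hμ hyseg
    have hBxy : 0 ≤ φ y - φ x - φ' x * (y - x) := breg_nonneg hsub hx hyI
    have hmono := breg_mono hconv hsub hx hμ hyseg
    rw [if_pos h1, if_neg h2, habs1, habs0,
      max_eq_left (by linarith : (0:ℝ) ≤ y - μ),
      max_eq_right (by linarith : μ - y ≤ 0)]
    rcases le_total τ (1-τ) with hc | hc
    · rw [min_eq_left hc]
      nlinarith [mul_nonneg (by linarith : (0:ℝ) ≤ 1 - 2*τ) hBxy]
    · rw [min_eq_right hc]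
      nlinarith [mul_le_mul_of_nonneg_left hmono (by linarith : (0:ℝ) ≤ 2*τ - 1)]
  · -- x < y ≤ μ
    have h1' : x < y := not_le.1 h1
    have hyseg : y ∈ segment ℝ x μ := by
      rw [segment_eq_uIcc, Set.mem_uIcc]
      left; exact ⟨h1'.le, h2⟩
    have hyI : y ∈ I := hI.segment_subset hx hμ hyseg
    have hBxy : 0 ≤ φ y - φ x - φ' x * (y - x) := breg_nonneg hsub hx hyI
    have hmono := breg_mono hconv hsub hx hμ hyseg
    rw [if_neg h1, if_pos h2, habs1, habs0,
      max_eq_right (by linarith : y - μ ≤ 0),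
      max_eq_left (by linarith : (0:ℝ) ≤ μ - y)]
    rcases le_total τ (1-τ) with hc | hc
    · rw [min_eq_left hc]
      nlinarith [mul_le_mul_of_nonneg_left hmono (by linarith : (0:ℝ) ≤ 1 - 2*τ)]
    · rw [min_eq_right hc]
      nlinarith [mul_nonneg (by linarith : (0:ℝ) ≤ 2*τ - 1) hBxy]
  · -- y > x, y > μ
    rw [if_neg h1, if_neg h2, habs0, max_eq_left (by push_neg at h2; linarith : (0:ℝ) ≤ y - μ),
      max_eq_right (by push_neg at h2; linarith : μ - y ≤ 0)]
    nlinarith [mul_le_mul_of_nonneg_right (min_le_left τ (1-τ)) hB]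

/-- Theorem 10(b,c) of the paper, sufficiency: any scoring function of the
form `S(x,y) = |1(x ≥ y) − τ|(φ(y) − φ(x) − φ'(x)(y−x))`, with `φ` convex
with subgradient `φ'`, is consistent for the τ-expectile; if `φ` is strictly
convex, `S` is strictly consistent. -/
theorem expectile_bregman_consistent
    (τ : ℝ) (hτ : τ ∈ Ioo (0:ℝ) 1)
    (I : Set ℝ) (hI : Convex ℝ I) (φ φ' : ℝ → ℝ)
    (hconv : ConvexOn ℝ I φ)
    (hsub : ∀ x ∈ I, ∀ y ∈ I, φ x + φ' x * (y - x) ≤ φ y)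
    (S : ℝ → ℝ → ℝ)
    (hSdef : ∀ x y, S x y =
      |(if y ≤ x then (1:ℝ) else 0) - τ| * (φ y - φ x - φ' x * (y - x)))
    (F : Measure ℝ) [IsProbabilityMeasure F] (hFI : ∀ᵐ y ∂F, y ∈ I)
    (hint1 : Integrable (fun y => y) F) (hint2 : Integrable (fun y => φ y) F)
    (μτ : ℝ) (hμI : μτ ∈ I)
    (hμ : τ * ∫ y, max (y - μτ) 0 ∂F = (1 - τ) * ∫ y, max (μτ - y) 0 ∂F) :
    (∀ x ∈ I, ∫ y, S μτ y ∂F ≤ ∫ y, S x y ∂F) ∧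
    (StrictConvexOn ℝ I φ → ∀ x ∈ I, x ≠ μτ →
      ∫ y, S μτ y ∂F < ∫ y, S x y ∂F) := by
  obtain ⟨hτ0, hτ1⟩ := hτ
  have hm0 : 0 < min τ (1-τ) := lt_min hτ0 (by linarith)
  -- integrability of the scores
  have hSint : ∀ z : ℝ, Integrable (fun y => S z y) F := by
    intro z
    have h1 : Integrable (fun y => φ y - φ z - φ' z * (y - z)) F := by
      exact (hint2.sub (integrable_const (φ z))).sub
        ((hint1.sub (integrable_const z)).const_mul (φ' z))
    have hw : AEStronglyMeasurable (fun y => |(if y ≤ z then (1:ℝ) else 0) - τ|) F := by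
      apply Measurable.aestronglyMeasurable
      exact ((Measurable.ite measurableSet_Iic measurable_const measurable_const).sub
        measurable_const).abs
    have hb : ∀ y, ‖|(if y ≤ z then (1:ℝ) else 0) - τ|‖ ≤ 1 := by
      intro y
      rw [Real.norm_eq_abs, abs_abs]
      split_ifs
      · rw [abs_of_pos (by linarith)]; linarith
      · rw [zero_sub, abs_neg, abs_of_pos hτ0]; linarith
    have hprod := h1.bdd_mul hw (c := 1) (Filter.Eventually.of_forall hb)
    exact hprod.congr (Filter.Eventually.of_forall fun y => (hSdef z y).symm)
  have hmax1 : Integrable (fun y => max (y - μτ) 0) F :=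
    (hint1.sub (integrable_const μτ)).pos_part
  have hmax2 : Integrable (fun y => max (μτ - y) 0) F :=
    ((integrable_const μτ).sub hint1).pos_part
  have main : ∀ x ∈ I, ∫ y, S μτ y ∂F
      + min τ (1-τ) * (φ μτ - φ x - φ' x * (μτ - x)) ≤ ∫ y, S x y ∂F := by
    intro x hx
    have hint3 : Integrable
        (fun y => (φ' μτ - φ' x) * (τ * max (y - μτ) 0 - (1-τ) * max (μτ - y) 0)) F :=
      ((hmax1.const_mul τ).sub (hmax2.const_mul (1-τ))).const_mul (φ' μτ - φ' x)
    have hlhs_int : Integrable (fun y => min τ (1-τ) * (φ μτ - φ x - φ' x * (μτ - x))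
        + (φ' μτ - φ' x) * (τ * max (y - μτ) 0 - (1-τ) * max (μτ - y) 0)) F :=
      (integrable_const _).add hint3
    have hrhs_int : Integrable (fun y => S x y - S μτ y) F := (hSint x).sub (hSint μτ)
    have hpt : ∀ y, min τ (1-τ) * (φ μτ - φ x - φ' x * (μτ - x))
        + (φ' μτ - φ' x) * (τ * max (y - μτ) 0 - (1-τ) * max (μτ - y) 0)
        ≤ S x y - S μτ y := by
      intro y
      rw [hSdef, hSdef]
      exact key_pointwise ⟨hτ0, hτ1⟩ hI hconv hsub hx hμI y
    have hmono := integral_mono hlhs_int hrhs_int hpt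
    have h0 : τ * (∫ y, max (y - μτ) 0 ∂F) - (1-τ) * (∫ y, max (μτ - y) 0 ∂F) = 0 := by
      rw [hμ]; ring
    have hLHS : ∫ y, (min τ (1-τ) * (φ μτ - φ x - φ' x * (μτ - x))
        + (φ' μτ - φ' x) * (τ * max (y - μτ) 0 - (1-τ) * max (μτ - y) 0)) ∂F
        = min τ (1-τ) * (φ μτ - φ x - φ' x * (μτ - x)) := by
      rw [integral_add (integrable_const _) hint3, integral_const, integral_const_mul,
        integral_sub (hmax1.const_mul τ) (hmax2.const_mul (1-τ)),
        integral_const_mul, integral_const_mul, h0]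
      simp
    have hRHS : ∫ y, (S x y - S μτ y) ∂F = ∫ y, S x y ∂F - ∫ y, S μτ y ∂F :=
      integral_sub (hSint x) (hSint μτ)
    rw [hLHS, hRHS] at hmono
    linarith
  constructor
  · intro x hx
    have h := main x hx
    have hB0 : 0 ≤ φ μτ - φ x - φ' x * (μτ - x) := breg_nonneg hsub hx hμI
    nlinarith [mul_nonneg hm0.le hB0]
  · intro hs x hx hne
    have h := main x hx
    have hBpos := breg_pos hI hs hsub hx hμI hne
    nlinarith [mul_pos hm0 hBpos]
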